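/- Doeblin-type convergence for the auxiliary chain: For every λ ∈ (0,1) and L ∈ ℕ, the minorization constant of P_{λ,L} satisfies β := Σ_{j=0}^L min_{0≤i≤L} P_{λ,L}(i,j) = (1−λ)^{L−1}, and consequently for every k ≥ 0 and every initial state ω ∈ {0,…,L}, the total variation distance between the k-step distribution started at ω and ρ satisfies (1/2) Σ_{ω'=0}^L |(P_{λ,L}^k)(ω, ω') − ρ(ω')| ≤ (1 − (1−λ)^{L−1})^k. -/

import Mathlib

/-!
Doeblin-type convergence for the auxiliary chain: the minorization constant of
`P_{λ,L}` is `β = Σ_j min_i P_{λ,L}(i,j) = (1−λ)^{L−1}`, and consequently, for every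
`k ≥ 0` and every initial state `ω`, the total variation distance between the `k`-step
distribution started at `ω` and the stationary distribution `ρ` satisfies
`(1/2) Σ_{ω'} |(P_{λ,L}^k)(ω,ω') − ρ(ω')| ≤ (1 − (1−λ)^{L−1})^k`.
-/

open Finset

noncomputable section

namespace MTD1D

/-- The transition matrix `P_{λ,L}` on the states `{0,…,L}`:
for a row `i ∈ {0,…,L−1}` the entries are `(1−λ)^{j−i} λ` for `i ≤ j ≤ L−1`,
`(1−λ)^{L−i}` for `j = L`, and `0` for `j < i`; row `L` equals row `0`. -/
def Pmat (L : ℕ) (lam : ℝ) (i j : Fin (L+1)) : ℝ :=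
  let i' : ℕ := if i.val = L then 0 else i.val
  if j.val = L then (1 - lam)^(L - i')
  else if i' ≤ j.val then (1 - lam)^(j.val - i') * lam
  else 0

/-- `P_{λ,L}` as a matrix (so that matrix powers are available). -/
def PmatM (L : ℕ) (lam : ℝ) : Matrix (Fin (L+1)) (Fin (L+1)) ℝ :=
  Matrix.of (Pmat L lam)

/-- The stationary vector `ρ` of `P_{λ,L}`. -/
def rho (L : ℕ) (lam : ℝ) (x : Fin (L+1)) : ℝ :=
  if x.val = L then (1 - lam) / (1 + ((L:ℝ) - 1) * lam)
  else lam / (1 + ((L:ℝ) - 1) * lam)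

lemma geom (lam : ℝ) (n : ℕ) :
    ∑ t ∈ Finset.range n, (1-lam)^t * lam = 1 - (1-lam)^n := by
  induction n with
  | zero => simp
  | succ n ih => rw [Finset.sum_range_succ, ih, pow_succ]; ring

lemma Dpos (L : ℕ) {lam : ℝ} (h0 : 0 < lam) (h1 : lam < 1) :
    0 < 1 + ((L:ℝ) - 1) * lam := by
  nlinarith [Nat.cast_nonneg (α := ℝ) L, mul_nonneg (Nat.cast_nonneg (α := ℝ) L) h0.le]

lemma rho_nonneg (L : ℕ) {lam : ℝ} (h0 : 0 < lam) (h1 : lam < 1) (x : Fin (L+1)) :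
    0 ≤ rho L lam x := by
  have hD := Dpos L h0 h1
  have h2 : (0:ℝ) ≤ 1 - lam := by linarith
  unfold rho; split <;> positivity

lemma rho_sum (L : ℕ) {lam : ℝ} (h0 : 0 < lam) (h1 : lam < 1) :
    ∑ x : Fin (L+1), rho L lam x = 1 := by
  have hD := (Dpos L h0 h1).ne'
  calc ∑ x : Fin (L+1), rho L lam x
      = ∑ n ∈ Finset.range (L+1),
          (if n = L then (1-lam) / (1 + ((L:ℝ) - 1) * lam)
           else lam / (1 + ((L:ℝ) - 1) * lam)) := by
        rw [← Fin.sum_univ_eq_sum_range]; rfl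
    _ = (1-lam) / (1 + ((L:ℝ) - 1) * lam)
        + ∑ n ∈ Finset.range L, lam / (1 + ((L:ℝ) - 1) * lam) := by
        rw [Finset.sum_range_succ, if_pos rfl]
        rw [Finset.sum_congr rfl fun n hn => if_neg (by simp only [Finset.mem_range] at hn; omega)]
        ring
    _ = 1 := by
        rw [Finset.sum_const, Finset.card_range]
        rw [nsmul_eq_mul, ← mul_div_assoc, ← add_div, div_eq_one_iff_eq hD]
        ring

lemma stationary (L : ℕ) {lam : ℝ} (h0 : 0 < lam) (h1 : lam < 1) (j : Fin (L+1)) :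
    ∑ i : Fin (L+1), rho L lam i * Pmat L lam i j = rho L lam j := by
  have hD := (Dpos L h0 h1).ne'
  set D : ℝ := 1 + ((L:ℝ) - 1) * lam with hDdef
  have step : ∑ i : Fin (L+1), rho L lam i * Pmat L lam i j
      = ∑ n ∈ Finset.range (L+1),
          ((if n = L then (1-lam)/D else lam/D) *
            (let m : ℕ := if n = L then 0 else n;
             if j.val = L then (1 - lam)^(L - m)
             else if m ≤ j.val then (1 - lam)^(j.val - m) * lam
             else 0)) := by
    rw [← Fin.sum_univ_eq_sum_range]; rfl
  rw [step, Finset.sum_range_succ]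
  by_cases hj : j.val = L
  · -- column L
    have h2 : ∑ n ∈ Finset.range L,
        ((if n = L then (1-lam)/D else lam/D) *
          (let m : ℕ := if n = L then 0 else n;
           if j.val = L then (1 - lam)^(L - m)
           else if m ≤ j.val then (1 - lam)^(j.val - m) * lam
           else 0))
        = ∑ n ∈ Finset.range L, (lam/D) * (1-lam)^(L - n) := by
      refine Finset.sum_congr rfl fun n hn => ?_
      simp only [Finset.mem_range] at hn
      simp only [if_neg (by omega : ¬ n = L), if_pos hj]
    rw [h2]
    have h3 : ∑ n ∈ Finset.range L, (lam/D) * (1-lam)^(L - n)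
        = ∑ n ∈ Finset.range L, (lam/D) * (1-lam)^(n+1) := by
      rw [← Finset.sum_range_reflect]
      refine Finset.sum_congr rfl fun n hn => ?_
      simp only [Finset.mem_range] at hn
      congr 2
      omega
    have h4 : ∑ n ∈ Finset.range L, (lam/D) * (1-lam)^(n+1)
        = ((1-lam)/D) * (1 - (1-lam)^L) := by
      rw [← geom lam L, Finset.mul_sum]
      refine Finset.sum_congr rfl fun n hn => ?_
      rw [pow_succ]
      ring
    rw [h3, h4]
    simp only [hj, rho, ← hDdef]
    norm_num
    field_simp
    ring
  · -- column j < L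
    have hjL : j.val < L := by omega
    have h2 : ∑ n ∈ Finset.range L,
        ((if n = L then (1-lam)/D else lam/D) *
          (let m : ℕ := if n = L then 0 else n;
           if j.val = L then (1 - lam)^(L - m)
           else if m ≤ j.val then (1 - lam)^(j.val - m) * lam
           else 0))
        = ∑ n ∈ Finset.range L, ((lam/D) * (if n ≤ j.val then (1-lam)^(j.val - n) * lam else 0)) := by
      refine Finset.sum_congr rfl fun n hn => ?_
      simp only [Finset.mem_range] at hn
      simp only [if_neg (by omega : ¬ n = L), if_neg hj]
    rw [h2]
    have h3 : ∑ n ∈ Finset.range L, ((lam/D) * (if n ≤ j.val then (1-lam)^(j.val - n) * lam else 0))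
        = ∑ n ∈ Finset.range (j.val+1), ((lam/D) * ((1-lam)^(j.val - n) * lam)) := by
      rw [← Finset.sum_subset (Finset.range_subset_range.mpr (by omega : j.val + 1 ≤ L))
        (fun x hx hx2 => by
          simp only [Finset.mem_range] at hx hx2
          rw [if_neg (by omega), mul_zero])]
      refine Finset.sum_congr rfl fun n hn => ?_
      simp only [Finset.mem_range] at hn
      rw [if_pos (by omega)]
    have h4 : ∑ n ∈ Finset.range (j.val+1), ((lam/D) * ((1-lam)^(j.val - n) * lam))
        = (lam/D) * (1 - (1-lam)^(j.val+1)) := by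
      rw [← geom lam (j.val+1), Finset.mul_sum]
      rw [← Finset.sum_range_reflect (fun n => (lam/D) * ((1-lam)^n * lam)) (j.val+1)]
      refine Finset.sum_congr rfl fun n hn => ?_
      simp only [Finset.mem_range] at hn
      congr 2
      all_goals omega
    rw [h3, h4]
    simp only [hj, rho, ← hDdef]
    norm_num
    field_simp
    ring

def PmatN (L : ℕ) (lam : ℝ) (n j : ℕ) : ℝ :=
  let i' : ℕ := if n = L then 0 else n
  if j = L then (1 - lam)^(L - i')
  else if i' ≤ j then (1 - lam)^(j - i') * lam
  else 0

lemma Pmat_eq (L : ℕ) (lam : ℝ) (i j : Fin (L+1)) :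
    Pmat L lam i j = PmatN L lam i.val j.val := rfl

lemma PmatN_nonneg (L : ℕ) {lam : ℝ} (h0 : 0 < lam) (h1 : lam < 1) (n j : ℕ) :
    0 ≤ PmatN L lam n j := by
  have h2 : (0:ℝ) ≤ 1 - lam := by linarith
  unfold PmatN
  split_ifs <;> positivity

lemma Pmat_nonneg (L : ℕ) {lam : ℝ} (h0 : 0 < lam) (h1 : lam < 1) (i j : Fin (L+1)) :
    0 ≤ Pmat L lam i j := PmatN_nonneg L h0 h1 i.val j.val

lemma min_col (L : ℕ) {lam : ℝ} (h0 : 0 < lam) (h1 : lam < 1) (j : Fin (L+1)) :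
    Finset.univ.inf' Finset.univ_nonempty (fun i => Pmat L lam i j)
      = (if j.val = L then (1-lam)^L
         else if j.val = L - 1 then (1-lam)^(L-1) * lam
         else 0) := by
  have hq0 : (0:ℝ) ≤ 1 - lam := by linarith
  have hq1 : (1:ℝ) - lam ≤ 1 := by linarith
  have h0L : (0:ℕ) < L + 1 := by omega
  by_cases hj : j.val = L
  · rw [if_pos hj]
    apply le_antisymm
    · calc Finset.univ.inf' Finset.univ_nonempty (fun i => Pmat L lam i j)
          ≤ Pmat L lam ⟨0, h0L⟩ j := Finset.inf'_le _ (Finset.mem_univ _)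
        _ = (1-lam)^L := by
            rw [Pmat_eq]
            unfold PmatN
            rw [if_pos hj]
            split <;> simp
    · apply Finset.le_inf'
      intro i _
      have : Pmat L lam i j = (1-lam)^(L - (if i.val = L then 0 else i.val)) := by
        rw [Pmat_eq]; unfold PmatN; rw [if_pos hj]
      rw [this]
      exact pow_le_pow_of_le_one hq0 hq1 (by omega)
  · have hjL : j.val < L := by omega
    by_cases hj1 : j.val = L - 1
    · rw [if_neg hj, if_pos hj1]
      apply le_antisymm
      · calc Finset.univ.inf' Finset.univ_nonempty (fun i => Pmat L lam i j)
            ≤ Pmat L lam ⟨0, h0L⟩ j := Finset.inf'_le _ (Finset.mem_univ _)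
          _ = (1-lam)^(L-1) * lam := by
              rw [Pmat_eq]
              show PmatN L lam 0 j.val = _
              unfold PmatN
              rw [if_neg hj]
              have hm : (if (0:ℕ) = L then (0:ℕ) else 0) = 0 := by split <;> rfl
              rw [hm, if_pos (by omega), hj1]
              norm_num
      · apply Finset.le_inf'
        intro i _
        have hm : (if i.val = L then 0 else i.val) ≤ L - 1 := by split <;> omega
        have : Pmat L lam i j = (1-lam)^(j.val - (if i.val = L then 0 else i.val)) * lam := by
          rw [Pmat_eq]; unfold PmatN
          rw [if_neg hj, if_pos (by omega)]
        rw [this]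
        have := pow_le_pow_of_le_one hq0 hq1 (show j.val - (if i.val = L then 0 else i.val) ≤ L - 1 by omega)
        nlinarith
    · rw [if_neg hj, if_neg hj1]
      apply le_antisymm
      · have hlt : j.val + 1 < L + 1 := by omega
        calc Finset.univ.inf' Finset.univ_nonempty (fun i => Pmat L lam i j)
            ≤ Pmat L lam ⟨j.val+1, hlt⟩ j := Finset.inf'_le _ (Finset.mem_univ _)
          _ = 0 := by
              rw [Pmat_eq]
              show PmatN L lam (j.val+1) j.val = 0
              unfold PmatN
              rw [if_neg hj, if_neg (show ¬(j.val+1 = L) by omega)]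
              rw [if_neg (by omega)]
      · exact Finset.le_inf' _ _ fun i _ => Pmat_nonneg L h0 h1 i j

lemma min_sum (L : ℕ) {lam : ℝ} (h0 : 0 < lam) (h1 : lam < 1) :
    ∑ j : Fin (L+1), Finset.univ.inf' Finset.univ_nonempty (fun i => Pmat L lam i j)
      = (1 - lam)^(L-1) := by
  have step : ∑ j : Fin (L+1), Finset.univ.inf' Finset.univ_nonempty (fun i => Pmat L lam i j)
      = ∑ n ∈ Finset.range (L+1),
          (if n = L then (1-lam)^L
           else if n = L - 1 then (1-lam)^(L-1) * lam
           else 0) := by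
    rw [show (∑ j : Fin (L+1), Finset.univ.inf' Finset.univ_nonempty (fun i => Pmat L lam i j))
        = ∑ j : Fin (L+1),
            (if j.val = L then (1-lam)^L
             else if j.val = L - 1 then (1-lam)^(L-1) * lam
             else 0) from Finset.sum_congr rfl fun j _ => min_col L h0 h1 j]
    rw [← Fin.sum_univ_eq_sum_range]
  rw [step]
  rcases Nat.eq_zero_or_pos L with hL | hL
  · subst hL; norm_num
  · obtain ⟨M, rfl⟩ : ∃ M, L = M + 1 := ⟨L - 1, by omega⟩
    rw [Finset.sum_range_succ, Finset.sum_range_succ]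
    rw [if_pos rfl, if_neg (by omega), if_pos (by omega)]
    rw [Finset.sum_eq_zero (fun n hn => by
      simp only [Finset.mem_range] at hn
      rw [if_neg (by omega), if_neg (by omega)])]
    simp only [Nat.add_sub_cancel]
    rw [pow_succ]
    ring

lemma geomIf (lam : ℝ) (m : ℕ) : ∀ L, m ≤ L →
    ∑ j ∈ Finset.range L, (if m ≤ j then (1-lam)^(j-m) * lam else 0)
      = 1 - (1-lam)^(L-m) := by
  intro L hL
  induction L, hL using Nat.le_induction with
  | base =>
      rw [Finset.sum_eq_zero, Nat.sub_self, pow_zero]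
      · ring
      · intro j hj
        rw [if_neg]
        simp only [Finset.mem_range] at hj
        omega
  | succ L hL ih =>
      rw [Finset.sum_range_succ, ih, if_pos hL,
        show L + 1 - m = (L - m) + 1 by omega, pow_succ]
      ring

lemma row_sum (L : ℕ) (lam : ℝ) (i : Fin (L+1)) :
    ∑ j : Fin (L+1), Pmat L lam i j = 1 := by
  have hm : (if i.val = L then 0 else i.val) ≤ L := by
    split <;> omega
  set m : ℕ := if i.val = L then 0 else i.val with hmdef
  calc ∑ j : Fin (L+1), Pmat L lam i j
      = ∑ n ∈ Finset.range (L+1),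
          (if n = L then (1-lam)^(L-m) else if m ≤ n then (1-lam)^(n-m)*lam else 0) := by
        rw [← Fin.sum_univ_eq_sum_range]
        rfl
    _ = (if L = L then (1-lam)^(L-m) else if m ≤ L then (1-lam)^(L-m)*lam else 0)
        + ∑ n ∈ Finset.range L,
          (if n = L then (1-lam)^(L-m) else if m ≤ n then (1-lam)^(n-m)*lam else 0) := by
        rw [Finset.sum_range_succ]; ring
    _ = (1-lam)^(L-m) + ∑ n ∈ Finset.range L, (if m ≤ n then (1-lam)^(n-m)*lam else 0) := by
        rw [if_pos rfl]
        congr 1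
        refine Finset.sum_congr rfl fun n hn => ?_
        rw [if_neg (by simp only [Finset.mem_range] at hn; omega)]
    _ = 1 := by rw [geomIf lam m L hm]; ring

lemma contract (L : ℕ) {lam : ℝ} (h0 : 0 < lam) (h1 : lam < 1)
    (u : Fin (L+1) → ℝ) (hu : ∑ i, u i = 0) :
    ∑ j : Fin (L+1), |∑ i : Fin (L+1), u i * Pmat L lam i j|
      ≤ (1 - (1-lam)^(L-1)) * ∑ i : Fin (L+1), |u i| := by
  set m : Fin (L+1) → ℝ := fun j => Finset.univ.inf' Finset.univ_nonempty (fun i => Pmat L lam i j)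
    with hmdef
  have hm_le : ∀ i j, m j ≤ Pmat L lam i j := fun i j => Finset.inf'_le _ (Finset.mem_univ i)
  have key : ∀ j, ∑ i : Fin (L+1), u i * Pmat L lam i j
      = ∑ i : Fin (L+1), u i * (Pmat L lam i j - m j) := by
    intro j
    simp only [mul_sub, Finset.sum_sub_distrib, ← Finset.sum_mul, hu, zero_mul, sub_zero]
  calc ∑ j : Fin (L+1), |∑ i : Fin (L+1), u i * Pmat L lam i j|
      = ∑ j : Fin (L+1), |∑ i : Fin (L+1), u i * (Pmat L lam i j - m j)| := by
        simp only [key]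
    _ ≤ ∑ j : Fin (L+1), ∑ i : Fin (L+1), |u i| * (Pmat L lam i j - m j) := by
        refine Finset.sum_le_sum fun j _ => ?_
        refine le_trans (Finset.abs_sum_le_sum_abs _ _) (Finset.sum_le_sum fun i _ => ?_)
        rw [abs_mul, abs_of_nonneg (sub_nonneg.mpr (hm_le i j))]
    _ = ∑ i : Fin (L+1), |u i| * ((∑ j : Fin (L+1), Pmat L lam i j) - ∑ j : Fin (L+1), m j) := by
        rw [Finset.sum_comm]
        refine Finset.sum_congr rfl fun i _ => ?_
        rw [← Finset.mul_sum, Finset.sum_sub_distrib]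
    _ = ∑ i : Fin (L+1), |u i| * (1 - (1-lam)^(L-1)) := by
        refine Finset.sum_congr rfl fun i _ => ?_
        rw [row_sum L lam i, hmdef, min_sum L h0 h1]
    _ = (1 - (1-lam)^(L-1)) * ∑ i : Fin (L+1), |u i| := by
        rw [← Finset.sum_mul]
        ring

lemma row_sum_pow (L : ℕ) (lam : ℝ) (k : ℕ) (w : Fin (L+1)) :
    ∑ j : Fin (L+1), (PmatM L lam ^ k) w j = 1 := by
  induction k generalizing w with
  | zero => simp [Matrix.one_apply]
  | succ k ih =>
      simp only [pow_succ, Matrix.mul_apply]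
      rw [Finset.sum_comm]
      calc ∑ i : Fin (L+1), ∑ j : Fin (L+1), (PmatM L lam ^ k) w i * PmatM L lam i j
          = ∑ i : Fin (L+1), (PmatM L lam ^ k) w i * ∑ j : Fin (L+1), Pmat L lam i j := by
            refine Finset.sum_congr rfl fun i _ => ?_
            rw [Finset.mul_sum]
            rfl
        _ = 1 := by
            rw [Finset.sum_congr rfl fun i (_ : i ∈ Finset.univ) => by
              rw [row_sum L lam i, mul_one]]
            exact ih w

theorem tv_bound (L : ℕ) (lam : ℝ) (h0 : 0 < lam) (h1 : lam < 1) :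
    (∀ (k : ℕ) (w : Fin (L+1)),
      (1/2 : ℝ) * ∑ w' : Fin (L+1), |(PmatM L lam ^ k) w w' - rho L lam w'|
        ≤ (1 - (1 - lam)^(L-1))^k) := by
  intro k w
  induction k with
  | zero =>
      simp only [pow_zero, Matrix.one_apply]
      have hb : ∑ w' : Fin (L+1), |(if w = w' then (1:ℝ) else 0) - rho L lam w'| ≤ 2 := by
        calc ∑ w' : Fin (L+1), |(if w = w' then (1:ℝ) else 0) - rho L lam w'|
            ≤ ∑ w' : Fin (L+1), ((if w = w' then (1:ℝ) else 0) + rho L lam w') := by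
              refine Finset.sum_le_sum fun w' _ => ?_
              have h2 := rho_nonneg L h0 h1 w'
              have h3 : (0:ℝ) ≤ (if w = w' then (1:ℝ) else 0) := by split <;> norm_num
              calc |(if w = w' then (1:ℝ) else 0) - rho L lam w'|
                  ≤ |(if w = w' then (1:ℝ) else 0)| + |rho L lam w'| := abs_sub _ _
                _ = _ := by rw [abs_of_nonneg h2, abs_of_nonneg h3]
          _ = 2 := by
              rw [Finset.sum_add_distrib, rho_sum L h0 h1, Finset.sum_ite_eq]
              norm_num
      linarith
  | succ k ih =>
      have hbeta0 : (0:ℝ) ≤ 1 - (1-lam)^(L-1) := by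
        have : (1-lam)^(L-1) ≤ 1 := pow_le_one₀ (by linarith) (by linarith)
        linarith
      set u : Fin (L+1) → ℝ := fun i => (PmatM L lam ^ k) w i - rho L lam i with hudef
      have hu0 : ∑ i, u i = 0 := by
        simp only [hudef, Finset.sum_sub_distrib, row_sum_pow L lam k w, rho_sum L h0 h1, sub_self]
      have hrep : ∀ j, (PmatM L lam ^ (k+1)) w j - rho L lam j = ∑ i, u i * Pmat L lam i j := by
        intro j
        rw [pow_succ, Matrix.mul_apply]
        rw [← stationary L h0 h1 j]
        simp only [hudef, sub_mul, Finset.sum_sub_distrib]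
        rfl
      calc (1/2 : ℝ) * ∑ w' : Fin (L+1), |(PmatM L lam ^ (k+1)) w w' - rho L lam w'|
          = (1/2 : ℝ) * ∑ w' : Fin (L+1), |∑ i, u i * Pmat L lam i w'| := by
            simp only [hrep]
        _ ≤ (1/2 : ℝ) * ((1 - (1-lam)^(L-1)) * ∑ i, |u i|) := by
            have := contract L h0 h1 u hu0
            linarith
        _ = (1 - (1-lam)^(L-1)) * ((1/2 : ℝ) * ∑ i, |u i|) := by ring
        _ ≤ (1 - (1-lam)^(L-1)) * (1 - (1-lam)^(L-1))^k := by
            exact mul_le_mul_of_nonneg_left ih hbeta0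
        _ = (1 - (1-lam)^(L-1))^(k+1) := by rw [pow_succ]; ring


/-- **Doeblin-type convergence**: the minorization constant of `P_{λ,L}` equals
`(1−λ)^{L−1}`, and the `k`-step distributions converge to `ρ` in total variation at
geometric rate `1 − (1−λ)^{L−1}`. -/
theorem doeblin_convergence (L : ℕ) (lam : ℝ) (h0 : 0 < lam) (h1 : lam < 1) :
    (∑ j : Fin (L+1), Finset.univ.inf' Finset.univ_nonempty (fun i => Pmat L lam i j)
        = (1 - lam)^(L-1)) ∧
    (∀ (k : ℕ) (w : Fin (L+1)),
      (1/2 : ℝ) * ∑ w' : Fin (L+1), |(PmatM L lam ^ k) w w' - rho L lam w'|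
        ≤ (1 - (1 - lam)^(L-1))^k) := by
  exact ⟨min_sum L h0 h1, tv_bound L lam h0 h1⟩

end MTD1D
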